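/- Let H be a normal subgroup of prime index r in a group G, with G/H cyclic generated by the image of σ. Let ρ' be a finite-dimensional irreducible complex representation of H. Then ρ' extends to a representation of G if and only if ρ' ≅ ρ'^σ; and in that case there are exactly r isomorphism classes of extensions, any two of which differ by twisting with a character of G/H. -/

import Mathlib

open Module

set_option linter.unusedSectionVars false
section ExtensionAux

variable {G : Type*} [Group G] {H : Subgroup G} [H.Normal]
variable {V : Type*} [AddCommGroup V] [Module ℂ V] [FiniteDimensional ℂ V] [Nontrivial V]

private lemma aux_schur (ρ' : Representation ℂ H V)
    (hirr : ∀ p : Submodule ℂ V, (∀ h : H, ∀ v ∈ p, ρ' h v ∈ p) → p = ⊥ ∨ p = ⊤)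
    {T : Module.End ℂ V} (hT : ∀ h : H, T * ρ' h = ρ' h * T) :
    ∃ c : ℂ, T = c • (1 : Module.End ℂ V) := by
  obtain ⟨c, hc⟩ := Module.End.exists_eigenvalue T
  refine ⟨c, ?_⟩
  have hinv : ∀ h : H, ∀ v ∈ T.eigenspace c, ρ' h v ∈ T.eigenspace c := by
    intro h v hv
    rw [Module.End.mem_eigenspace_iff] at hv ⊢
    have h1 : T (ρ' h v) = ρ' h (T v) := by
      have := congrArg (fun L : Module.End ℂ V => L v) (hT h)
      simpa [Module.End.mul_apply] using this
    rw [h1, hv, map_smul]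
  rcases hirr _ hinv with h | h
  · exact absurd h (Module.End.hasEigenvalue_iff.mp hc)
  · ext v
    have hv : v ∈ T.eigenspace c := h ▸ Submodule.mem_top
    simpa [Module.End.mem_eigenspace_iff] using hv

private lemma aux_unit_ne (u : (Module.End ℂ V)ˣ) {v : V} (hv : v ≠ 0) : u.val v ≠ 0 := by
  intro h0
  apply hv
  calc v = (u.inv * u.val) v := by rw [Units.inv_eq_val_inv, u.inv_mul]; rfl
  _ = u.inv (u.val v) := rfl
  _ = 0 := by rw [h0]; simp

private lemma aux_order {r : ℕ} (hr : r.Prime) (hindex : H.index = r) {σ : G}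
    (hgen : ∀ g : G, ∃ (m : ℕ) (h : G), h ∈ H ∧ g = σ ^ m * h) :
    orderOf ((σ : G ⧸ H)) = r := by
  have hσH : σ ∉ H := by
    intro hσ
    have htop : H = ⊤ := by
      ext g
      simp only [Subgroup.mem_top, iff_true]
      obtain ⟨m, h, hh, rfl⟩ := hgen g
      exact mul_mem (pow_mem hσ m) hh
    rw [htop, Subgroup.index_top] at hindex
    exact hr.ne_one hindex.symm
  have hcard : Nat.card (G ⧸ H) = r := by rw [← Subgroup.index_eq_card, hindex]
  have hdvd : orderOf ((σ : G ⧸ H)) ∣ r := hcard ▸ orderOf_dvd_natCard _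
  rcases hr.eq_one_or_self_of_dvd _ hdvd with h1 | h
  · exact absurd ((QuotientGroup.eq_one_iff σ).mp (orderOf_eq_one_iff.mp h1)) hσH
  · exact h

private lemma aux_pow_mem {r : ℕ} {σ : G} (hord : orderOf ((σ : G ⧸ H)) = r) :
    σ ^ r ∈ H := by
  rw [← QuotientGroup.eq_one_iff]
  have : ((σ : G ⧸ H)) ^ r = 1 := by rw [← hord]; exact pow_orderOf_eq_one _
  simpa using this

private lemma aux_cong {r : ℕ} {σ : G} (hord : orderOf ((σ : G ⧸ H)) = r)
    {a b : ℕ} {x y : G} (hx : x ∈ H) (hy : y ∈ H) (hxy : σ ^ a * x = σ ^ b * y) :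
    a ≡ b [MOD r] := by
  have h1 := congrArg (QuotientGroup.mk' H) hxy
  simp only [map_mul, map_pow] at h1
  rw [show (QuotientGroup.mk' H) x = 1 from (QuotientGroup.eq_one_iff x).mpr hx,
    show (QuotientGroup.mk' H) y = 1 from (QuotientGroup.eq_one_iff y).mpr hy,
    mul_one, mul_one] at h1
  rw [← hord]
  exact (pow_eq_pow_iff_modEq).mp h1


private lemma aux_iter (ρ' : Representation ℂ H V) (σ : G)
    (F : (Module.End ℂ V)ˣ)
    (hF1 : ∀ h : H, F * ρ'.asGroupHom h * F⁻¹ = ρ'.asGroupHom (MulAut.conjNormal σ h)) :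
    ∀ (n : ℕ) (h : H),
      F ^ n * ρ'.asGroupHom h = ρ'.asGroupHom (MulAut.conjNormal (σ ^ n) h) * F ^ n := by
  intro n
  induction n with
  | zero =>
    intro h
    simp
  | succ n ih =>
    intro h
    have h1 : F ^ (n + 1) * ρ'.asGroupHom h
        = F * (F ^ n * ρ'.asGroupHom h) := by
      rw [← mul_assoc, ← pow_succ']
    rw [h1, ih h, ← mul_assoc]
    have h2 : F * ρ'.asGroupHom (MulAut.conjNormal (σ ^ n) h)
        = ρ'.asGroupHom (MulAut.conjNormal σ (MulAut.conjNormal (σ ^ n) h)) * F := by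
      have := hF1 (MulAut.conjNormal (σ ^ n) h)
      calc F * ρ'.asGroupHom (MulAut.conjNormal (σ ^ n) h)
          = (F * ρ'.asGroupHom (MulAut.conjNormal (σ ^ n) h) * F⁻¹) * F := by
            rw [mul_assoc, inv_mul_cancel, mul_one]
        _ = _ := by rw [this]
    rw [h2]
    have h3 : MulAut.conjNormal σ (MulAut.conjNormal (σ ^ n) h)
        = MulAut.conjNormal (σ ^ (n + 1)) h := by
      rw [pow_succ', map_mul]
      rfl
    rw [h3, mul_assoc, ← pow_succ']

private lemma aux_construct {r : ℕ} {σ : G}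
    (hgen : ∀ g : G, ∃ (m : ℕ) (h : G), h ∈ H ∧ g = σ ^ m * h)
    (hord : orderOf ((σ : G ⧸ H)) = r)
    (ρ' : Representation ℂ H V)
    (F : (Module.End ℂ V)ˣ)
    (hF1 : ∀ h : H, F * ρ'.asGroupHom h * F⁻¹ = ρ'.asGroupHom (MulAut.conjNormal σ h))
    (hσr : σ ^ r ∈ H)
    (hFr : F ^ r = ρ'.asGroupHom ⟨σ ^ r, hσr⟩) :
    ∃ ρ : Representation ℂ G V, ∀ h : H, ρ (h : G) = ρ' h := by
  set U := ρ'.asGroupHom with hU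
  -- well-definedness, one-sided
  have key1 : ∀ (a b : ℕ) (x y : G) (hx : x ∈ H) (hy : y ∈ H), b ≤ a →
      σ ^ a * x = σ ^ b * y → F ^ a * U ⟨x, hx⟩ = F ^ b * U ⟨y, hy⟩ := by
    intro a b x y hx hy hba hxy
    have hcong : a ≡ b [MOD r] := aux_cong hord hx hy hxy
    obtain ⟨t, ht⟩ := (Nat.modEq_iff_dvd' hba).mp hcong.symm
    have ha : a = b + r * t := by omega
    subst ha
    have hyx : y = σ ^ (r * t) * x := by
      have : σ ^ b * (σ ^ (r * t) * x) = σ ^ b * y := by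
        rw [← hxy]; rw [pow_add]; group
      exact (mul_left_cancel this).symm
    have hsub : (⟨σ ^ r, hσr⟩ : H) ^ t * ⟨x, hx⟩ = ⟨y, hy⟩ := by
      ext
      simp only [Subgroup.coe_mul, SubmonoidClass.coe_pow]
      rw [hyx, ← pow_mul]
    calc F ^ (b + r * t) * U ⟨x, hx⟩
        = F ^ b * ((F ^ r) ^ t * U ⟨x, hx⟩) := by
          rw [pow_add, pow_mul, mul_assoc]
      _ = F ^ b * U ⟨y, hy⟩ := by
          rw [hFr, ← map_pow, ← map_mul, hsub]
  have key : ∀ (a b : ℕ) (x y : G) (hx : x ∈ H) (hy : y ∈ H),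
      σ ^ a * x = σ ^ b * y → F ^ a * U ⟨x, hx⟩ = F ^ b * U ⟨y, hy⟩ := by
    intro a b x y hx hy hxy
    rcases le_total b a with hba | hab
    · exact key1 a b x y hx hy hba hxy
    · exact (key1 b a y x hy hx hab hxy.symm).symm
  choose m w hw1 hw2 using hgen
  set Φ : G → (Module.End ℂ V)ˣ := fun g => F ^ m g * U ⟨w g, hw1 g⟩ with hΦ
  have Φspec : ∀ (a : ℕ) (x : G) (hx : x ∈ H), Φ (σ ^ a * x) = F ^ a * U ⟨x, hx⟩ := by
    intro a x hx
    exact key _ _ _ _ _ _ (hw2 (σ ^ a * x)).symm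
  have Φ1 : Φ 1 = 1 := by
    have h1 : (1 : G) = σ ^ 0 * 1 := by group
    rw [h1, Φspec 0 1 (one_mem H)]
    rw [pow_zero, one_mul]
    exact map_one U
  have Φmul : ∀ g₁ g₂ : G, Φ (g₁ * g₂) = Φ g₁ * Φ g₂ := by
    intro g₁ g₂
    set x : H := (MulAut.conjNormal (σ ^ m g₂))⁻¹ ⟨w g₁, hw1 g₁⟩ with hx
    have hxval : (x : G) = (σ ^ m g₂)⁻¹ * w g₁ * σ ^ m g₂ := MulAut.conjNormal_inv_apply _ _
    have hdec : g₁ * g₂ = σ ^ (m g₁ + m g₂) * ((x : G) * w g₂) := by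
      rw [hxval, pow_add]
      conv_lhs => rw [hw2 g₁, hw2 g₂]
      group
    have hmem : (x : G) * w g₂ ∈ H := mul_mem x.2 (hw1 g₂)
    rw [hdec, Φspec _ _ hmem]
    have hsplit : (⟨(x : G) * w g₂, hmem⟩ : H) = x * ⟨w g₂, hw1 g₂⟩ := rfl
    rw [hsplit, map_mul, pow_add, mul_assoc, ← mul_assoc (F ^ m g₂)]
    rw [aux_iter ρ' σ F hF1 (m g₂) x]
    have hback : MulAut.conjNormal (σ ^ m g₂) x = ⟨w g₁, hw1 g₁⟩ := by
      rw [hx]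
      exact MulEquiv.apply_symm_apply _ _
    rw [hback]
    simp only [hΦ]
    simp only [← hU]
    group
  refine ⟨(Units.coeHom _).comp ⟨⟨Φ, Φ1⟩, Φmul⟩, ?_⟩
  intro h
  have h1 : (h : G) = σ ^ 0 * (h : G) := by group
  show (Φ (h : G) : Module.End ℂ V) = ρ' h
  rw [h1, Φspec 0 _ h.2]
  simp [hU, Representation.asGroupHom_apply]


private lemma aux_char {r : ℕ} {σ : G}
    (hgen : ∀ g : G, ∃ (m : ℕ) (h : G), h ∈ H ∧ g = σ ^ m * h)
    (hord : orderOf ((σ : G ⧸ H)) = r)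
    (z : ℂˣ) (hz : z ^ r = 1) :
    ∃ χ : G →* ℂˣ, (∀ h ∈ H, χ h = 1) ∧
      ∀ (a : ℕ) (x : G), x ∈ H → χ (σ ^ a * x) = z ^ a := by
  have hzmod : ∀ {a b : ℕ}, a ≡ b [MOD r] → z ^ a = z ^ b := by
    intro a b hab
    rw [pow_eq_pow_iff_modEq]
    exact hab.of_dvd (orderOf_dvd_of_pow_eq_one hz)
  choose m w hw1 hw2 using hgen
  have hform : ∀ (a : ℕ) (x : G), x ∈ H → z ^ m (σ ^ a * x) = z ^ a := by
    intro a x hx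
    exact hzmod (aux_cong hord (hw1 _) hx (hw2 (σ ^ a * x)).symm)
  refine ⟨⟨⟨fun g => z ^ m g, ?_⟩, ?_⟩, ?_, ?_⟩
  · -- map_one
    have h1 : (1 : G) = σ ^ 0 * 1 := by group
    show z ^ m 1 = 1
    rw [h1, hform 0 1 (one_mem H), pow_zero]
  · -- map_mul
    intro g₁ g₂
    show z ^ m (g₁ * g₂) = z ^ m g₁ * z ^ m g₂
    set x : G := (σ ^ m g₂)⁻¹ * w g₁ * σ ^ m g₂ with hx
    have hxmem : x ∈ H := by
      have := ‹H.Normal›.conj_mem (w g₁) (hw1 g₁) (σ ^ m g₂)⁻¹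
      simpa [hx] using this
    have hdec : g₁ * g₂ = σ ^ (m g₁ + m g₂) * (x * w g₂) := by
      rw [hx, pow_add]
      conv_lhs => rw [hw2 g₁, hw2 g₂]
      group
    rw [hdec, hform _ _ (mul_mem hxmem (hw1 g₂)), pow_add]
  · -- trivial on H
    intro h hh
    have h1 : h = σ ^ 0 * h := by group
    show z ^ m h = 1
    rw [h1, hform 0 h hh, pow_zero]
  · -- formula
    intro a x hx
    exact hform a x hx

private lemma aux_compare {r : ℕ} {σ : G} (hσr : σ ^ r ∈ H)
    (ρ' : Representation ℂ H V)
    (hirr : ∀ p : Submodule ℂ V, (∀ h : H, ∀ v ∈ p, ρ' h v ∈ p) → p = ⊥ ∨ p = ⊤)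
    (ρ τ : Representation ℂ G V)
    (hρ : ∀ h : H, ρ (h : G) = ρ' h) (hτ : ∀ h : H, τ (h : G) = ρ' h) :
    ∃ c : ℂˣ, (c : ℂ) ^ r = 1 ∧ ∀ (a : ℕ) (x : G), x ∈ H →
      τ (σ ^ a * x) = (c : ℂ) ^ a • ρ (σ ^ a * x) := by
  have hconj : ∀ (π : Representation ℂ G V), (∀ h : H, π (h : G) = ρ' h) →
      ∀ h : H, π σ * ρ' h = ρ' (MulAut.conjNormal σ h) * π σ := by
    intro π hπ h
    rw [← hπ h, ← hπ (MulAut.conjNormal σ h), ← map_mul, ← map_mul]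
    congr 1
    rw [MulAut.conjNormal_apply]
    group
  set P := ρ.asGroupHom σ with hP
  set Q := τ.asGroupHom σ with hQ
  have hPval : (P : Module.End ℂ V) = ρ σ := ρ.asGroupHom_apply σ
  have hQval : (Q : Module.End ℂ V) = τ σ := τ.asGroupHom_apply σ
  have hPinv : ((P⁻¹ : (Module.End ℂ V)ˣ) : Module.End ℂ V) = ρ σ⁻¹ := by
    rw [← map_inv]
    exact ρ.asGroupHom_apply σ⁻¹
  set T : (Module.End ℂ V)ˣ := P⁻¹ * Q with hT
  have hTcomm : ∀ h : H, (T : Module.End ℂ V) * ρ' h = ρ' h * (T : Module.End ℂ V) := by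
    intro h
    have h1 : (T : Module.End ℂ V) = ρ σ⁻¹ * τ σ := by
      rw [hT, Units.val_mul, hPinv, hQval]
    have hρσ : ρ σ⁻¹ * ρ' (MulAut.conjNormal σ h) = ρ' h * ρ σ⁻¹ := by
      have := hconj ρ hρ h
      calc ρ σ⁻¹ * ρ' (MulAut.conjNormal σ h)
          = ρ σ⁻¹ * (ρ' (MulAut.conjNormal σ h) * ρ σ) * ρ σ⁻¹ := by
            rw [mul_assoc, mul_assoc, ← map_mul, mul_inv_cancel, map_one, mul_one]
        _ = ρ σ⁻¹ * (ρ σ * ρ' h) * ρ σ⁻¹ := by rw [← this]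
        _ = ρ' h * ρ σ⁻¹ := by
            rw [← mul_assoc, ← map_mul, inv_mul_cancel, map_one, one_mul]
    calc (T : Module.End ℂ V) * ρ' h = ρ σ⁻¹ * (τ σ * ρ' h) := by rw [h1, mul_assoc]
      _ = ρ σ⁻¹ * (ρ' (MulAut.conjNormal σ h) * τ σ) := by rw [hconj τ hτ h]
      _ = (ρ σ⁻¹ * ρ' (MulAut.conjNormal σ h)) * τ σ := by rw [mul_assoc]
      _ = ρ' h * (ρ σ⁻¹ * τ σ) := by rw [hρσ, mul_assoc]
      _ = ρ' h * (T : Module.End ℂ V) := by rw [h1]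
  obtain ⟨c, hc⟩ := aux_schur ρ' hirr hTcomm
  obtain ⟨v₀, hv₀⟩ := exists_ne (0 : V)
  have hc0 : c ≠ 0 := by
    intro h0
    apply aux_unit_ne T hv₀
    rw [hc, h0]
    simp
  have hτσ : τ σ = c • ρ σ := by
    have h1 : Q = P * T := by rw [hT, ← mul_assoc, mul_inv_cancel, one_mul]
    have := congrArg (Units.val) h1
    rw [Units.val_mul, hQval, hPval, hc] at this
    rw [this, mul_smul_comm, mul_one]
  have hcr : c ^ r = 1 := by
    have hσrH : τ (σ ^ r) = ρ (σ ^ r) := by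
      have h1 : τ ((⟨σ ^ r, hσr⟩ : H) : G) = ρ' ⟨σ ^ r, hσr⟩ := hτ _
      have h2 : ρ ((⟨σ ^ r, hσr⟩ : H) : G) = ρ' ⟨σ ^ r, hσr⟩ := hρ _
      exact h1.trans h2.symm
    have h3 : (c ^ r) • ρ σ ^ r = ρ σ ^ r := by
      have : τ σ ^ r = ρ σ ^ r := by rw [← map_pow, ← map_pow, hσrH]
      rwa [hτσ, smul_pow] at this
    have h4 : ρ σ ^ r ≠ 0 := by
      intro h0
      apply aux_unit_ne (P ^ r) hv₀
      rw [Units.val_pow_eq_pow_val, hPval, h0]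
      simp
    have h5 : (c ^ r - 1) • ρ σ ^ r = 0 := by
      rw [sub_smul, one_smul, h3, sub_self]
    rcases smul_eq_zero.mp h5 with h | h
    · exact sub_eq_zero.mp h
    · exact absurd h h4
  refine ⟨Units.mk0 c hc0, ?_, ?_⟩
  · exact_mod_cast hcr
  intro a x hx
  have h1 : τ (σ ^ a * x) = τ σ ^ a * τ x := by rw [map_mul, map_pow]
  have h2 : ρ (σ ^ a * x) = ρ σ ^ a * ρ x := by rw [map_mul, map_pow]
  have h3 : τ x = ρ x := by
    have := (hτ ⟨x, hx⟩).trans (hρ ⟨x, hx⟩).symm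
    exact this
  rw [h1, h2, h3, hτσ, smul_pow, smul_mul_assoc]
  rfl

end ExtensionAux


/-- Extension criterion for irreducible representations across a normal subgroup of prime index.
Let `H ⊴ G` with `G/H` cyclic of prime order `r`, generated by the image of `σ`, and let `ρ'` be
a finite-dimensional irreducible complex representation of `H`.  Then:
(1) `ρ'` extends to a representation of `G` iff `ρ' ≅ ρ'^σ`, where `ρ'^σ(h) = ρ'(σhσ⁻¹)`;
(2) in that case there are exactly `r` isomorphism classes of extensions, every extension is
isomorphic to one of them, and any two extensions differ by a twist with a character of `G/H`
(a character of `G` trivial on `H`). -/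
theorem extension_of_irreducible_from_prime_index_normal_subgroup
    {G : Type*} [Group G] (H : Subgroup G) [H.Normal] (r : ℕ) (hr : r.Prime)
    (hindex : H.index = r) (σ : G)
    (hgen : ∀ g : G, ∃ (m : ℕ) (h : G), h ∈ H ∧ g = σ ^ m * h)
    {V : Type*} [AddCommGroup V] [Module ℂ V] [FiniteDimensional ℂ V] [Nontrivial V]
    (ρ' : Representation ℂ H V)
    (hirr : ∀ p : Submodule ℂ V, (∀ h : H, ∀ v ∈ p, ρ' h v ∈ p) → p = ⊥ ∨ p = ⊤) :
    ((∃ ρ : Representation ℂ G V, ∀ h : H, ρ (h : G) = ρ' h) ↔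
      (∃ e : V ≃ₗ[ℂ] V, ∀ h : H, e.conj (ρ' h) = ρ' (MulAut.conjNormal σ h))) ∧
    ((∃ e : V ≃ₗ[ℂ] V, ∀ h : H, e.conj (ρ' h) = ρ' (MulAut.conjNormal σ h)) →
      ∃ ρs : Fin r → Representation ℂ G V,
        (∀ i, ∀ h : H, (ρs i) (h : G) = ρ' h) ∧
        (∀ i j, i ≠ j → ¬ ∃ e : V ≃ₗ[ℂ] V, ∀ g : G, (ρs j) g = e.conj ((ρs i) g)) ∧
        (∀ ρ : Representation ℂ G V, (∀ h : H, ρ (h : G) = ρ' h) →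
          ∃ i, ∃ e : V ≃ₗ[ℂ] V, ∀ g : G, ρ g = e.conj ((ρs i) g)) ∧
        (∀ ρ τ : Representation ℂ G V, (∀ h : H, ρ (h : G) = ρ' h) →
          (∀ h : H, τ (h : G) = ρ' h) →
          ∃ χ : G →* ℂˣ, (∀ h ∈ H, χ h = 1) ∧
            ∃ e : V ≃ₗ[ℂ] V, ∀ g : G, τ g = (χ g : ℂ) • e.conj (ρ g))) := by
  have hord : orderOf ((σ : G ⧸ H)) = r := aux_order hr hindex hgen
  have hσr : σ ^ r ∈ H := aux_pow_mem hord
  have hrne : r ≠ 0 := hr.ne_zero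
  -- forward direction of (1)
  have fwd : (∃ ρ : Representation ℂ G V, ∀ h : H, ρ (h : G) = ρ' h) →
      (∃ e : V ≃ₗ[ℂ] V, ∀ h : H, e.conj (ρ' h) = ρ' (MulAut.conjNormal σ h)) := by
    rintro ⟨ρ, hρ⟩
    have hfg : (ρ σ).comp (ρ σ⁻¹) = LinearMap.id := by
      rw [← Module.End.mul_eq_comp, ← map_mul, mul_inv_cancel, map_one]; rfl
    have hgf : (ρ σ⁻¹).comp (ρ σ) = LinearMap.id := by
      rw [← Module.End.mul_eq_comp, ← map_mul, inv_mul_cancel, map_one]; rfl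
    refine ⟨LinearEquiv.ofLinear (ρ σ) (ρ σ⁻¹) hfg hgf, ?_⟩
    intro h
    rw [LinearEquiv.conj_apply]
    show ((ρ σ).comp (ρ' h)).comp (ρ σ⁻¹) = ρ' (MulAut.conjNormal σ h)
    rw [← hρ h, ← hρ (MulAut.conjNormal σ h), ← Module.End.mul_eq_comp,
      ← Module.End.mul_eq_comp, ← map_mul, ← map_mul]
    congr 1
  -- backward direction of (1)
  have bwd : (∃ e : V ≃ₗ[ℂ] V, ∀ h : H, e.conj (ρ' h) = ρ' (MulAut.conjNormal σ h)) →
      (∃ ρ : Representation ℂ G V, ∀ h : H, ρ (h : G) = ρ' h) := by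
    rintro ⟨e, he⟩
    set U := ρ'.asGroupHom with hU
    have hfg : e.toLinearMap * e.symm.toLinearMap = 1 := by ext v; simp
    have hgf : e.symm.toLinearMap * e.toLinearMap = 1 := by ext v; simp
    set E : (Module.End ℂ V)ˣ := ⟨e.toLinearMap, e.symm.toLinearMap, hfg, hgf⟩ with hE
    have hEU : ∀ h : H, E * U h * E⁻¹ = U (MulAut.conjNormal σ h) := by
      intro h
      apply Units.ext
      show e.toLinearMap * (ρ' h) * e.symm.toLinearMap = (U (MulAut.conjNormal σ h)).val
      rw [Representation.asGroupHom_apply, ← he h, LinearEquiv.conj_apply,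
        Module.End.mul_eq_comp, Module.End.mul_eq_comp]
    set s : H := ⟨σ ^ r, hσr⟩ with hs
    set W : (Module.End ℂ V)ˣ := (U s)⁻¹ * E ^ r with hW
    have hErU : ∀ h : H, E ^ r * U h = (U s * U h * (U s)⁻¹) * E ^ r := by
      intro h
      rw [aux_iter ρ' σ E hEU r h]
      congr 1
      have h1 : MulAut.conjNormal (σ ^ r) h = s * h * s⁻¹ := by
        have : (σ ^ r) = ((s : H) : G) := rfl
        rw [this, MulAut.conjNormal_val, MulAut.conj_apply]
      rw [h1, map_mul, map_mul, map_inv]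
    have hWcommU : ∀ h : H, W * U h = U h * W := by
      intro h
      calc W * U h = (U s)⁻¹ * (E ^ r * U h) := by rw [hW]; group
        _ = (U s)⁻¹ * ((U s * U h * (U s)⁻¹) * E ^ r) := by rw [hErU h]
        _ = U h * ((U s)⁻¹ * E ^ r) := by group
        _ = U h * W := by rw [hW]
    have hWcomm : ∀ h : H, (W : Module.End ℂ V) * ρ' h = ρ' h * (W : Module.End ℂ V) := by
      intro h
      have := congrArg Units.val (hWcommU h)
      simpa [hU, Units.val_mul, Representation.asGroupHom_apply] using this
    obtain ⟨c, hc⟩ := aux_schur ρ' hirr hWcomm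
    obtain ⟨v₀, hv₀⟩ := exists_ne (0 : V)
    have hc0 : c ≠ 0 := by
      intro h0
      apply aux_unit_ne W hv₀
      rw [hc, h0]; simp
    obtain ⟨lam, hlam⟩ := IsAlgClosed.exists_pow_nat_eq c hr.pos
    have hlam0 : lam ≠ 0 := by
      intro h0
      rw [h0, zero_pow hrne] at hlam
      exact hc0 hlam.symm
    set alg : ℂ →* Module.End ℂ V := (algebraMap ℂ (Module.End ℂ V)).toMonoidHom with halg
    set sl : (Module.End ℂ V)ˣ := Units.map alg (Units.mk0 lam hlam0) with hsl
    set sc : (Module.End ℂ V)ˣ := Units.map alg (Units.mk0 c hc0) with hsc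
    have hcen : ∀ (z : ℂ) (hz : z ≠ 0) (u : (Module.End ℂ V)ˣ),
        Units.map alg (Units.mk0 z hz) * u = u * Units.map alg (Units.mk0 z hz) := by
      intro z hz u
      apply Units.ext
      show alg z * u.val = u.val * alg z
      exact Algebra.commutes z u.val
    set F : (Module.End ℂ V)ˣ := sl⁻¹ * E with hF
    have hF1 : ∀ h : H, F * U h * F⁻¹ = U (MulAut.conjNormal σ h) := by
      intro h
      have step1 : F * U h * F⁻¹ = sl⁻¹ * (E * U h * E⁻¹) * sl := by
        rw [hF]; group
      rw [step1, hEU h, mul_assoc, hsl, ← hcen lam hlam0, ← mul_assoc,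
        inv_mul_cancel, one_mul]
    have hWs : W = sc := by
      apply Units.ext
      rw [hc]
      show c • (1 : Module.End ℂ V) = alg c
      rw [halg]
      show c • (1 : Module.End ℂ V) = algebraMap ℂ (Module.End ℂ V) c
      rw [Module.algebraMap_end_eq_smul_id]
      rfl
    have hslr : sl ^ r = sc := by
      apply Units.ext
      show (alg lam) ^ r = alg c
      rw [← map_pow, hlam]
    have hFr : F ^ r = U s := by
      have hcomm : Commute sl E := by rw [hsl]; exact hcen lam hlam0 E
      have hcomm2 : U s * sc = sc * U s := by rw [hsc]; exact (hcen c hc0 (U s)).symm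
      calc F ^ r = sl⁻¹ ^ r * E ^ r := by rw [hF]; exact hcomm.inv_left.mul_pow r
        _ = (sl ^ r)⁻¹ * (U s * sc) := by
            rw [inv_pow]
            congr 1
            rw [← hWs, hW, ← mul_assoc, mul_inv_cancel, one_mul]
        _ = sc⁻¹ * (sc * U s) := by rw [hslr, hcomm2]
        _ = U s := by group
    obtain ⟨ρ, hρ⟩ := aux_construct hgen hord ρ' F hF1 hσr hFr
    exact ⟨ρ, hρ⟩
  refine ⟨⟨fwd, bwd⟩, ?_⟩
  intro hex
  obtain ⟨ρ0, hρ0⟩ := bwd hex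
  obtain ⟨v₀, hv₀⟩ := exists_ne (0 : V)
  set ζ : ℂ := Complex.exp (2 * Real.pi * Complex.I / r) with hζdef
  have hζ : IsPrimitiveRoot ζ r := Complex.isPrimitiveRoot_exp r hrne
  have hζ0 : ζ ≠ 0 := Complex.exp_ne_zero _
  set ζu : ℂˣ := Units.mk0 ζ hζ0 with hζu
  have hζur : ζu ^ r = 1 := by
    apply Units.ext
    show ζ ^ r = 1
    exact hζ.pow_eq_one
  have hχex : ∀ i : Fin r, ∃ χ : G →* ℂˣ, (∀ h ∈ H, χ h = 1) ∧
      ∀ (a : ℕ) (x : G), x ∈ H → χ (σ ^ a * x) = (ζu ^ (i : ℕ)) ^ a := by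
    intro i
    apply aux_char hgen hord
    rw [← pow_mul, mul_comm, pow_mul, hζur, one_pow]
  choose χ hχH hχform using hχex
  set ρs : Fin r → Representation ℂ G V := fun i =>
    { toFun := fun g => ((χ i g : ℂ)) • ρ0 g
      map_one' := by simp
      map_mul' := fun g₁ g₂ => by
        simp only [map_mul, Units.val_mul]
        rw [smul_mul_smul_comm] } with hρs
  have hρsval : ∀ (i : Fin r) (g : G), ρs i g = ((χ i g : ℂ)) • ρ0 g := fun i g => rfl
  have hext : ∀ i : Fin r, ∀ h : H, (ρs i) (h : G) = ρ' h := by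
    intro i h
    rw [hρsval, hχH i (h : G) h.2, Units.val_one, one_smul, hρ0 h]
  have hσval : ∀ i : Fin r, (χ i σ : ℂ) = ζ ^ (i : ℕ) := by
    intro i
    have h1 : σ = σ ^ 1 * 1 := by group
    rw [h1, hχform i 1 1 (one_mem H), pow_one]
    rfl
  refine ⟨ρs, hext, ?_, ?_, ?_⟩
  · -- distinctness
    rintro i j hij ⟨e', he'⟩
    apply hij
    have hcomm : ∀ h : H, e'.toLinearMap * ρ' h = ρ' h * e'.toLinearMap := by
      intro h
      have h1 : ρ' h = e'.conj (ρ' h) := by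
        have := he' (h : G)
        rwa [hext i h, hext j h] at this
      ext w
      show e' (ρ' h w) = ρ' h (e' w)
      conv_rhs => rw [h1]
      rw [LinearEquiv.conj_apply_apply, LinearEquiv.symm_apply_apply]
    obtain ⟨c, hc⟩ := aux_schur ρ' hirr hcomm
    have hc0 : c ≠ 0 := by
      intro h0
      have := congrArg (fun L : Module.End ℂ V => L v₀) hc
      simp only [LinearMap.smul_apply, Module.End.one_apply, h0, zero_smul] at this
      exact (e'.map_ne_zero_iff.mpr hv₀) this
    have hconjtriv : ∀ x : Module.End ℂ V, e'.conj x = x := by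
      intro x
      ext v
      have happ : ∀ y : V, e' y = c • y := by
        intro y
        have := congrArg (fun L : Module.End ℂ V => L y) hc
        simpa using this
      have hsymm : ∀ y : V, e'.symm y = c⁻¹ • y := by
        intro y
        have h1 : e' (e'.symm y) = y := e'.apply_symm_apply y
        rw [happ] at h1
        have h2 := congrArg (fun w => c⁻¹ • w) h1
        simpa [smul_smul, inv_mul_cancel₀ hc0] using h2
      rw [LinearEquiv.conj_apply_apply, hsymm, map_smul, happ, smul_smul,
        mul_inv_cancel₀ hc0, one_smul]
    have hσeq : ρs j σ = ρs i σ := by rw [he' σ, hconjtriv]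
    rw [hρsval, hρsval, hσval, hσval] at hσeq
    have hw : ρ0 σ v₀ ≠ 0 := by
      have := aux_unit_ne (ρ0.asGroupHom σ) hv₀
      rwa [ρ0.asGroupHom_apply] at this
    have hveq : (ζ ^ (j : ℕ) - ζ ^ (i : ℕ)) • ρ0 σ v₀ = 0 := by
      have := congrArg (fun L : Module.End ℂ V => L v₀) hσeq
      simp only [LinearMap.smul_apply] at this
      rw [sub_smul, this, sub_self]
    rcases smul_eq_zero.mp hveq with h | h
    · have : ζ ^ (j : ℕ) = ζ ^ (i : ℕ) := sub_eq_zero.mp h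
      exact (Fin.ext (hζ.pow_inj j.isLt i.isLt this)).symm
    · exact absurd h hw
  · -- exhaustiveness
    intro τ hτ
    obtain ⟨c, hcr, hform⟩ := aux_compare hσr ρ' hirr ρ0 τ hρ0 hτ
    haveI : NeZero r := ⟨hrne⟩
    obtain ⟨i, hi, hic⟩ := hζ.eq_pow_of_pow_eq_one hcr
    refine ⟨⟨i, hi⟩, LinearEquiv.refl ℂ V, ?_⟩
    intro g
    obtain ⟨a, x, hx, rfl⟩ := hgen g
    have hconjrefl : (LinearEquiv.refl ℂ V).conj (ρs ⟨i, hi⟩ (σ ^ a * x))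
        = ρs ⟨i, hi⟩ (σ ^ a * x) := by
      ext v
      rw [LinearEquiv.conj_apply_apply]
      rfl
    rw [hconjrefl, hform a x hx, hρsval, hχform ⟨i, hi⟩ a x hx]
    congr 1
    show (c : ℂ) ^ a = (((ζu ^ i) ^ a : ℂˣ) : ℂ)
    rw [← hic]
    push_cast
    rfl
  · -- twisting
    intro ρ τ hρ hτ
    obtain ⟨c, hcr, hform⟩ := aux_compare hσr ρ' hirr ρ τ hρ hτ
    have hcu : c ^ r = 1 := by
      apply Units.ext
      push_cast
      exact hcr
    obtain ⟨χ', hχ'H, hχ'form⟩ := aux_char hgen hord c hcu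
    refine ⟨χ', hχ'H, LinearEquiv.refl ℂ V, ?_⟩
    intro g
    obtain ⟨a, x, hx, rfl⟩ := hgen g
    have hconjrefl : (LinearEquiv.refl ℂ V).conj (ρ (σ ^ a * x)) = ρ (σ ^ a * x) := by
      ext v
      rw [LinearEquiv.conj_apply_apply]
      rfl
    rw [hconjrefl, hform a x hx, hχ'form a x hx, Units.val_pow_eq_pow_val]
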